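/- Let W be an r-dimensional subspace of d×d complex matrices spanned by r linearly independent partial permutation matrices. Then the number of nonzero partial permutation matrices contained in W is at most 2^r − 1. -/

import Mathlib

/-- A `d × d` partial permutation matrix over `ℂ`: a 0-1 matrix in which every row
and every column contains at most one nonzero entry. -/
def IsPartialPermMatrix {d : ℕ} (M : Matrix (Fin d) (Fin d) ℂ) : Prop :=
  (∀ i j, M i j = 0 ∨ M i j = 1) ∧
  (∀ i j j', M i j ≠ 0 → M i j' ≠ 0 → j = j') ∧
  (∀ i i' j, M i j ≠ 0 → M i' j ≠ 0 → i = i')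

/-- Key lemma: for an `r`-dimensional span `V` of matrices there are `r` positions
such that a member of `V` vanishing at all of them is zero. -/
theorem exists_pivot_positions {d r : ℕ} (P : Fin r → Matrix (Fin d) (Fin d) ℂ)
    (hli : LinearIndependent ℂ P) (hd : 0 < d) :
    ∃ p : Fin r → (Fin d) × (Fin d),
      ∀ v ∈ Submodule.span ℂ (Set.range P),
        (∀ k : Fin r, v (p k).1 (p k).2 = 0) → v = 0 := by
  classical
  set V : Submodule ℂ (Matrix (Fin d) (Fin d) ℂ) := Submodule.span ℂ (Set.range P) with hV
  haveI : FiniteDimensional ℂ V := FiniteDimensional.span_of_finite ℂ (Set.finite_range P)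
  have hrank : Module.finrank ℂ V = r := by
    rw [hV, finrank_span_eq_card hli, Fintype.card_fin]
  -- coordinate functionals on V
  let F : (Fin d × Fin d) → Module.Dual ℂ V := fun ij =>
    { toFun := fun v => (v : Matrix (Fin d) (Fin d) ℂ) ij.1 ij.2
      map_add' := fun x y => rfl
      map_smul' := fun c x => rfl }
  have hspan : Submodule.span ℂ (Set.range F) = ⊤ := by
    apply Submodule.span_eq_top_of_ne_zero
    intro z hz
    have hz' : (z : Matrix (Fin d) (Fin d) ℂ) ≠ 0 := by
      intro h
      exact hz (Subtype.ext h)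
    obtain ⟨i, hi⟩ := Function.ne_iff.mp hz'
    obtain ⟨j, hj⟩ := Function.ne_iff.mp hi
    exact ⟨F (i, j), Set.mem_range_self _, hj⟩
  obtain ⟨b, hb_sub, hb_span, hb_li⟩ := exists_linearIndependent ℂ (Set.range F)
  rw [hspan] at hb_span
  let B : Module.Basis b ℂ (Module.Dual ℂ V) := Module.Basis.mk hb_li (by rw [Subtype.range_coe, hb_span])
  haveI : Fintype b := FiniteDimensional.fintypeBasisIndex B
  have hcard : Fintype.card b = r := by
    have h1 := Module.finrank_eq_card_basis B
    rw [Subspace.dual_finrank_eq, hrank] at h1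
    omega
  let e : Fin r ≃ b := (Fintype.equivFinOfCardEq hcard).symm
  have hpre : ∀ k : Fin r, ∃ ij : Fin d × Fin d, F ij = (e k : Module.Dual ℂ V) :=
    fun k => hb_sub (e k).2
  choose p hp using hpre
  refine ⟨p, fun v hv hzero => ?_⟩
  have hall : ∀ φ : Module.Dual ℂ V, φ ⟨v, hv⟩ = 0 := by
    intro φ
    have hφ : φ ∈ Submodule.span ℂ b := by rw [hb_span]; trivial
    induction hφ using Submodule.span_induction with
    | mem x hx =>
      obtain ⟨k', hk'⟩ : ∃ k', (e k' : Module.Dual ℂ V) = x :=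
        ⟨e.symm ⟨x, hx⟩, by simp⟩
      rw [← hk', ← hp k']
      exact hzero k'
    | zero => simp
    | add x y _ _ hx hy => simp [hx, hy]
    | smul c x _ hx => simp [hx]
  have : (⟨v, hv⟩ : V) = 0 := (Module.forall_dual_apply_eq_zero_iff ℂ _).mp hall
  exact congrArg Subtype.val this

theorem stmt7 {d r : ℕ} (P : Fin r → Matrix (Fin d) (Fin d) ℂ)
    (hpp : ∀ i, IsPartialPermMatrix (P i))
    (hli : LinearIndependent ℂ P) :
    {M | M ∈ Submodule.span ℂ (Set.range P) ∧ IsPartialPermMatrix M ∧ M ≠ 0}.ncard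
      ≤ 2 ^ r - 1 := by
  classical
  rcases Nat.eq_zero_or_pos d with hd | hd
  · subst hd
    have hempty : {M : Matrix (Fin 0) (Fin 0) ℂ |
        M ∈ Submodule.span ℂ (Set.range P) ∧ IsPartialPermMatrix M ∧ M ≠ 0} = ∅ := by
      ext M
      simp only [Set.mem_setOf_eq, Set.mem_empty_iff_false, iff_false, not_and]
      intro _ _
      simp only [ne_eq, not_not]
      ext i j
      exact absurd i.2 (Nat.not_lt_zero _)
    rw [hempty, Set.ncard_empty]
    exact Nat.zero_le _
  obtain ⟨p, hp⟩ := exists_pivot_positions P hli hd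
  set S := {M | M ∈ Submodule.span ℂ (Set.range P) ∧ IsPartialPermMatrix M ∧ M ≠ 0} with hS
  let f : Matrix (Fin d) (Fin d) ℂ → Finset (Fin r) :=
    fun M => Finset.univ.filter (fun k => M (p k).1 (p k).2 = 1)
  have hmaps : ∀ M ∈ S, f M ∈ {s : Finset (Fin r) | s.Nonempty} := by
    rintro M ⟨hMspan, hMpp, hMne⟩
    rw [Set.mem_setOf_eq, Finset.nonempty_iff_ne_empty]
    intro hfe
    apply hMne
    apply hp M hMspan
    intro k
    rcases hMpp.1 (p k).1 (p k).2 with h | h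
    · exact h
    · exfalso
      have : k ∈ f M := by simp [f, h]
      rw [hfe] at this
      exact absurd this (Finset.notMem_empty k)
  have hinj : Set.InjOn f S := by
    rintro M ⟨hMspan, hMpp, -⟩ N ⟨hNspan, hNpp, -⟩ hfeq
    have hsub : M - N ∈ Submodule.span ℂ (Set.range P) := Submodule.sub_mem _ hMspan hNspan
    have : M - N = 0 := by
      apply hp _ hsub
      intro k
      have hMk : k ∈ f M ↔ M (p k).1 (p k).2 = 1 := by simp [f]
      have hNk : k ∈ f N ↔ N (p k).1 (p k).2 = 1 := by simp [f]
      have hiff : M (p k).1 (p k).2 = 1 ↔ N (p k).1 (p k).2 = 1 := by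
        rw [← hMk, ← hNk, hfeq]
      have : M (p k).1 (p k).2 = N (p k).1 (p k).2 := by
        rcases hMpp.1 (p k).1 (p k).2 with h | h <;>
          rcases hNpp.1 (p k).1 (p k).2 with h' | h'
        · rw [h, h']
        · exact absurd (hiff.mpr h') (by simp [h])
        · exact absurd (hiff.mp h) (by simp [h'])
        · rw [h, h']
      simpa [Matrix.sub_apply, sub_eq_zero] using this
    have := sub_eq_zero.mp this
    exact this
  have hfin : ({s : Finset (Fin r) | s.Nonempty} : Set (Finset (Fin r))).Finite :=
    Set.toFinite _
  have hle := Set.ncard_le_ncard_of_injOn f hmaps hinj hfin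
  refine hle.trans ?_
  have : ({s : Finset (Fin r) | s.Nonempty} : Set (Finset (Fin r))) =
      Set.univ \ {(∅ : Finset (Fin r))} := by
    ext s
    simp [Finset.nonempty_iff_ne_empty]
  rw [this, Set.ncard_diff (by simp) (Set.toFinite _), Set.ncard_univ, Set.ncard_singleton]
  rw [Nat.card_eq_fintype_card, Fintype.card_finset, Fintype.card_fin]
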